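/- Let p, B, τ, T be positive integers with T ≥ τ, let L ≥ μ > 0, σ ≥ 0 and a ≥ 4 be real numbers, and set κ = L/μ. For a nonnegative integer t set η_t = 4/(μ(t + a)), t_c(t) = ⌊t/τ⌋·τ, and A_t = (η_t L σ²/(pB)) · ( η_t/2 + (L(p+1)/p)·∑_{k=t_c(t)+1}^{t−1} η_k² ). Suppose ζ : ℕ → ℝ is nonnegative and satisfies ζ(t+1) ≤ (1 − μη_t)·ζ(t) + A_t for all 0 ≤ t ≤ T−1. Then ζ(T) ≤ (a³/(T + a − 1)³)·ζ(0) + 4κσ²T(T + 2a)/(μpB(T + a − 1)³) + (64κ²σ²(p+1)(τ−1)/(μp²B(T + a − 1)³)) · [ τ + τ(τ−1)/a + τ(τ−1)(2τ−1)/(6a²) + 4(T − τ) ]. -/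

import Mathlib

open scoped BigOperators

lemma lupa_sum_id (n : ℕ) : ∑ i ∈ Finset.range n, (i:ℝ) = n*(n-1)/2 := by
  induction n with
  | zero => simp
  | succ n ih => rw [Finset.sum_range_succ, ih]; push_cast; ring

lemma lupa_sum_sq (n : ℕ) : ∑ i ∈ Finset.range n, (i:ℝ)^2 = n*(n-1)*(2*n-1)/6 := by
  induction n with
  | zero => simp
  | succ n ih => rw [Finset.sum_range_succ, ih]; push_cast; ring

lemma lupa_sum_shift (n : ℕ) (a : ℝ) (ha : a ≠ 0) :
    ∑ s ∈ Finset.range n, (1 + (s:ℝ)/a)^2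
      = n + n*(n-1)/a + n*(n-1)*(2*n-1)/(6*a^2) := by
  have h : ∀ s : ℕ, (1 + (s:ℝ)/a)^2 = 1 + (2/a)*(s:ℝ) + (1/a^2)*(s:ℝ)^2 := by
    intro s; field_simp; ring
  calc ∑ s ∈ Finset.range n, (1 + (s:ℝ)/a)^2
      = ∑ s ∈ Finset.range n, (1 + (2/a)*(s:ℝ) + (1/a^2)*(s:ℝ)^2) :=
        Finset.sum_congr rfl (fun s _ => h s)
    _ = n + (2/a) * (n*(n-1)/2) + (1/a^2) * (n*(n-1)*(2*n-1)/6) := by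
        rw [Finset.sum_add_distrib, Finset.sum_add_distrib, ← Finset.mul_sum,
          ← Finset.mul_sum, lupa_sum_id, lupa_sum_sq]; simp
    _ = n + n*(n-1)/a + n*(n-1)*(2*n-1)/(6*a^2) := by field_simp

set_option maxHeartbeats 1600000 in
theorem lupa_main_convergence
    (p B τ T : ℕ) (hp : 0 < p) (hB : 0 < B) (hτ : 0 < τ) (hT : τ ≤ T) (hT0 : 0 < T)
    (L μ σ a : ℝ) (hμ : 0 < μ) (hLμ : μ ≤ L) (hσ : 0 ≤ σ) (ha : 4 ≤ a)
    (κ : ℝ) (hκ : κ = L / μ)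
    (η : ℕ → ℝ) (hη : ∀ t : ℕ, η t = 4 / (μ * ((t : ℝ) + a)))
    (tc : ℕ → ℕ) (htc : ∀ t : ℕ, tc t = t / τ * τ)
    (A : ℕ → ℝ)
    (hA : ∀ t : ℕ, A t = (η t * L * σ ^ 2 / ((p : ℝ) * B)) *
      (η t / 2 + (L * ((p : ℝ) + 1) / p) * ∑ k ∈ Finset.Ico (tc t + 1) t, η k ^ 2))
    (ζ : ℕ → ℝ) (hζ : ∀ t : ℕ, 0 ≤ ζ t)
    (hrec : ∀ t : ℕ, t < T → ζ (t + 1) ≤ (1 - μ * η t) * ζ t + A t) :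
    ζ T ≤ (a ^ 3 / ((T : ℝ) + a - 1) ^ 3) * ζ 0
      + 4 * κ * σ ^ 2 * T * ((T : ℝ) + 2 * a) / (μ * p * B * ((T : ℝ) + a - 1) ^ 3)
      + (64 * κ ^ 2 * σ ^ 2 * ((p : ℝ) + 1) * ((τ : ℝ) - 1)
          / (μ * (p : ℝ) ^ 2 * B * ((T : ℝ) + a - 1) ^ 3)) *
        ((τ : ℝ) + (τ : ℝ) * ((τ : ℝ) - 1) / a
          + (τ : ℝ) * ((τ : ℝ) - 1) * (2 * (τ : ℝ) - 1) / (6 * a ^ 2)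
          + 4 * ((T : ℝ) - (τ : ℝ))) := by
  have hp' : (0:ℝ) < p := Nat.cast_pos.mpr hp
  have hB' : (0:ℝ) < B := Nat.cast_pos.mpr hB
  have hL : 0 < L := lt_of_lt_of_le hμ hLμ
  have ha0 : (0:ℝ) < a := by linarith
  have hta : ∀ t : ℕ, (0:ℝ) < (t:ℝ) + a := by
    intro t; have := Nat.cast_nonneg (α := ℝ) t; linarith
  have hμη : ∀ t : ℕ, μ * η t = 4 / ((t:ℝ) + a) := by
    intro t; rw [hη]; field_simp
  have hτ1 : (1:ℝ) ≤ (τ:ℝ) := by exact_mod_cast hτ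
  have hτT : (τ:ℝ) ≤ (T:ℝ) := by exact_mod_cast hT
  have hT1 : (1:ℝ) ≤ (T:ℝ) := by exact_mod_cast hT0
  -- abbreviations
  set G : ℕ → ℝ := fun s => ∑ k ∈ Finset.Ico (tc s + 1) s, ((s:ℝ)+a)^2/((k:ℝ)+a)^2 with hG
  set c1 : ℝ := 8*L*σ^2/(μ^2*(p:ℝ)*B) with hc1
  set c2 : ℝ := 64*L^2*σ^2*((p:ℝ)+1)/(μ^3*(p:ℝ)^2*B) with hc2
  have hc1pos : 0 ≤ c1 := by rw [hc1]; positivity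
  have hc2pos : 0 ≤ c2 := by rw [hc2]; positivity
  -- Step 1: unrolled recursion
  have key : ∀ t : ℕ, t ≤ T →
      ((t:ℝ) + a - 1)^3 * ζ t ≤ (a-1)^3 * ζ 0 + ∑ s ∈ Finset.range t, ((s:ℝ)+a)^3 * A s := by
    intro t
    induction t with
    | zero => intro _; simp
    | succ t ih =>
      intro h
      have ht : t < T := h
      have ih' := ih (le_of_lt ht)
      have h1 : ((t:ℝ)+a)^3 * ζ (t+1) ≤ ((t:ℝ)+a)^3 * ((1 - μ * η t) * ζ t + A t) :=
        mul_le_mul_of_nonneg_left (hrec t ht) (by positivity)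
      have h2 : ((t:ℝ)+a)^3 * ((1 - μ * η t) * ζ t + A t)
          = ((t:ℝ)+a)^2 * (((t:ℝ)+a)-4) * ζ t + ((t:ℝ)+a)^3 * A t := by
        rw [hμη]
        have hne := (hta t).ne'
        field_simp
      have hx4 : (4:ℝ) ≤ (t:ℝ) + a := by
        have := Nat.cast_nonneg (α := ℝ) t; linarith
      have h3 : ((t:ℝ)+a)^2 * (((t:ℝ)+a)-4) ≤ ((t:ℝ)+a-1)^3 := by nlinarith
      have h4 : ((t:ℝ)+a)^2 * (((t:ℝ)+a)-4) * ζ t ≤ ((t:ℝ)+a-1)^3 * ζ t :=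
        mul_le_mul_of_nonneg_right h3 (hζ t)
      have hcast : ((t+1:ℕ):ℝ) + a - 1 = (t:ℝ) + a := by push_cast; ring
      rw [hcast, Finset.sum_range_succ]
      calc ((t:ℝ)+a)^3 * ζ (t+1)
          ≤ ((t:ℝ)+a)^2 * (((t:ℝ)+a)-4) * ζ t + ((t:ℝ)+a)^3 * A t := by
            rw [← h2]; exact h1
        _ ≤ ((t:ℝ)+a-1)^3 * ζ t + ((t:ℝ)+a)^3 * A t := by linarith
        _ ≤ (a-1)^3 * ζ 0 + ∑ s ∈ Finset.range t, ((s:ℝ)+a)^3 * A s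
              + ((t:ℝ)+a)^3 * A t := by linarith
        _ = (a-1)^3 * ζ 0 + (∑ s ∈ Finset.range t, ((s:ℝ)+a)^3 * A s
              + ((t:ℝ)+a)^3 * A t) := by ring
  -- Step 2: per-term identity for the weighted noise
  have hAeq : ∀ s : ℕ, ((s:ℝ)+a)^3 * A s = c1 * ((s:ℝ)+a) + c2 * G s := by
    intro s
    have hsum : ∑ k ∈ Finset.Ico (tc s + 1) s, η k ^ 2
        = (16/μ^2) * ∑ k ∈ Finset.Ico (tc s + 1) s, 1/((k:ℝ)+a)^2 := by
      rw [Finset.mul_sum]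
      refine Finset.sum_congr rfl (fun k _ => ?_)
      rw [hη]
      have := (hta k).ne'
      field_simp
      ring
    have hsum2 : G s = ((s:ℝ)+a)^2 * ∑ k ∈ Finset.Ico (tc s + 1) s, 1/((k:ℝ)+a)^2 := by
      rw [hG, Finset.mul_sum]
      exact Finset.sum_congr rfl (fun k _ => by ring)
    rw [hA, hη, hsum, hsum2, hc1, hc2]
    set X := ∑ k ∈ Finset.Ico (tc s + 1) s, 1/((k:ℝ)+a)^2
    have hsa := (hta s).ne'
    field_simp
    ring
  -- Step 3a: sum of the first part
  have hsum1 : ∑ s ∈ Finset.range T, ((s:ℝ)+a) = (T:ℝ)*((T:ℝ)-1)/2 + (T:ℝ)*a := by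
    rw [Finset.sum_add_distrib, lupa_sum_id]
    simp [Finset.sum_const, Finset.card_range, nsmul_eq_mul]
  -- Step 3b: bound for the drift sums, early block
  have hGsmall : ∀ s : ℕ, s < τ → G s ≤ ((τ:ℝ)-1) * (1 + (s:ℝ)/a)^2 := by
    intro s hs
    have htcs : tc s = 0 := by rw [htc, Nat.div_eq_of_lt hs, Nat.zero_mul]
    have hterm : ∀ k ∈ Finset.Ico (tc s + 1) s, ((s:ℝ)+a)^2/((k:ℝ)+a)^2
        ≤ ((s:ℝ)+a)^2/(1+a)^2 := by
      intro k hk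
      have hk1 : 1 ≤ k := by
        rw [htcs] at hk
        exact (Finset.mem_Ico.mp hk).1
      have hk1' : (1:ℝ) ≤ (k:ℝ) := by exact_mod_cast hk1
      apply div_le_div_of_nonneg_left (by positivity) (by positivity)
      nlinarith [hta k]
    have hcard : ((Finset.Ico (tc s + 1) s).card : ℝ) ≤ (τ:ℝ) - 1 := by
      rw [Nat.card_Ico]
      have h1 : s - (tc s + 1) ≤ τ - 1 := by omega
      calc ((s - (tc s + 1) : ℕ) : ℝ) ≤ ((τ - 1 : ℕ) : ℝ) := by exact_mod_cast h1
        _ = (τ:ℝ) - 1 := by rw [Nat.cast_sub hτ]; simp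
    calc G s ≤ (Finset.Ico (tc s + 1) s).card • (((s:ℝ)+a)^2/(1+a)^2) :=
          Finset.sum_le_card_nsmul _ _ _ hterm
      _ = ((Finset.Ico (tc s + 1) s).card : ℝ) * (((s:ℝ)+a)^2/(1+a)^2) := by
          rw [nsmul_eq_mul]
      _ ≤ ((τ:ℝ)-1) * (((s:ℝ)+a)^2/(1+a)^2) := by
          apply mul_le_mul_of_nonneg_right hcard (by positivity)
      _ ≤ ((τ:ℝ)-1) * (1 + (s:ℝ)/a)^2 := by
          apply mul_le_mul_of_nonneg_left _ (by linarith)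
          have heq : (1 + (s:ℝ)/a)^2 = ((s:ℝ)+a)^2/a^2 := by field_simp; ring
          rw [heq]
          apply div_le_div_of_nonneg_left (by positivity) (by positivity)
          nlinarith
  -- Step 3c: bound for the drift sums, later blocks
  have hGbig : ∀ s : ℕ, τ ≤ s → G s ≤ 4 * ((τ:ℝ)-1) := by
    intro s hs
    have htcτ : τ ≤ tc s := by
      rw [htc]
      have h1 : 1 ≤ s / τ := (Nat.one_le_div_iff hτ).mpr hs
      calc τ = 1 * τ := (one_mul τ).symm
        _ ≤ s / τ * τ := Nat.mul_le_mul_right τ h1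
    have hstc : s < tc s + τ := by
      rw [htc]
      calc s = τ * (s / τ) + s % τ := (Nat.div_add_mod s τ).symm
        _ < τ * (s / τ) + τ := Nat.add_lt_add_left (Nat.mod_lt s hτ) _
        _ = s / τ * τ + τ := by rw [Nat.mul_comm]
    have hterm : ∀ k ∈ Finset.Ico (tc s + 1) s, ((s:ℝ)+a)^2/((k:ℝ)+a)^2 ≤ 4 := by
      intro k hk
      obtain ⟨hk1, hk2⟩ := Finset.mem_Ico.mp hk
      have hkτ : τ + 1 ≤ k := by omega
      have hsk : s + 2 ≤ k + τ := by omega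
      have hkτ' : (τ:ℝ) + 1 ≤ (k:ℝ) := by exact_mod_cast hkτ
      have hsk' : (s:ℝ) + 2 ≤ (k:ℝ) + (τ:ℝ) := by exact_mod_cast hsk
      have h2k : (s:ℝ) + a ≤ 2 * ((k:ℝ) + a) := by linarith
      rw [div_le_iff₀ (by positivity)]
      nlinarith [hta s, hta k]
    have hcard : ((Finset.Ico (tc s + 1) s).card : ℝ) ≤ (τ:ℝ) - 1 := by
      rw [Nat.card_Ico]
      have h1 : s - (tc s + 1) ≤ τ - 1 := by omega
      calc ((s - (tc s + 1) : ℕ) : ℝ) ≤ ((τ - 1 : ℕ) : ℝ) := by exact_mod_cast h1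
        _ = (τ:ℝ) - 1 := by rw [Nat.cast_sub hτ]; simp
    calc G s ≤ (Finset.Ico (tc s + 1) s).card • (4:ℝ) :=
          Finset.sum_le_card_nsmul _ _ _ hterm
      _ = ((Finset.Ico (tc s + 1) s).card : ℝ) * 4 := by rw [nsmul_eq_mul]
      _ ≤ ((τ:ℝ)-1) * 4 := mul_le_mul_of_nonneg_right hcard (by norm_num)
      _ = 4 * ((τ:ℝ)-1) := by ring
  -- Step 3d: total drift sum
  have hGsum : ∑ s ∈ Finset.range T, G s
      ≤ ((τ:ℝ)-1) * ((τ:ℝ) + (τ:ℝ)*((τ:ℝ)-1)/a + (τ:ℝ)*((τ:ℝ)-1)*(2*(τ:ℝ)-1)/(6*a^2)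
          + 4*((T:ℝ)-(τ:ℝ))) := by
    rw [Finset.range_eq_Ico, ← Finset.sum_Ico_consecutive _ (Nat.zero_le τ) hT]
    have hpart1 : ∑ s ∈ Finset.Ico 0 τ, G s
        ≤ ((τ:ℝ)-1) * ((τ:ℝ) + (τ:ℝ)*((τ:ℝ)-1)/a + (τ:ℝ)*((τ:ℝ)-1)*(2*(τ:ℝ)-1)/(6*a^2)) := by
      rw [← Finset.range_eq_Ico]
      calc ∑ s ∈ Finset.range τ, G s
          ≤ ∑ s ∈ Finset.range τ, ((τ:ℝ)-1) * (1 + (s:ℝ)/a)^2 :=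
            Finset.sum_le_sum (fun s hs => hGsmall s (Finset.mem_range.mp hs))
        _ = ((τ:ℝ)-1) * ∑ s ∈ Finset.range τ, (1 + (s:ℝ)/a)^2 := by
            rw [Finset.mul_sum]
        _ = ((τ:ℝ)-1) * ((τ:ℝ) + (τ:ℝ)*((τ:ℝ)-1)/a + (τ:ℝ)*((τ:ℝ)-1)*(2*(τ:ℝ)-1)/(6*a^2)) := by
            rw [lupa_sum_shift τ a ha0.ne']
    have hpart2 : ∑ s ∈ Finset.Ico τ T, G s ≤ ((T:ℝ)-(τ:ℝ)) * (4 * ((τ:ℝ)-1)) := by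
      calc ∑ s ∈ Finset.Ico τ T, G s ≤ (Finset.Ico τ T).card • (4 * ((τ:ℝ)-1)) :=
            Finset.sum_le_card_nsmul _ _ _
              (fun s hs => hGbig s (Finset.mem_Ico.mp hs).1)
        _ = ((T - τ : ℕ) : ℝ) * (4 * ((τ:ℝ)-1)) := by rw [Nat.card_Ico, nsmul_eq_mul]
        _ = ((T:ℝ)-(τ:ℝ)) * (4 * ((τ:ℝ)-1)) := by rw [Nat.cast_sub hT]
    have hτ4 : (0:ℝ) ≤ (τ:ℝ) - 1 := by linarith
    calc ∑ s ∈ Finset.Ico 0 τ, G s + ∑ s ∈ Finset.Ico τ T, G s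
        ≤ ((τ:ℝ)-1) * ((τ:ℝ) + (τ:ℝ)*((τ:ℝ)-1)/a + (τ:ℝ)*((τ:ℝ)-1)*(2*(τ:ℝ)-1)/(6*a^2))
          + ((T:ℝ)-(τ:ℝ)) * (4 * ((τ:ℝ)-1)) := by linarith
      _ = ((τ:ℝ)-1) * ((τ:ℝ) + (τ:ℝ)*((τ:ℝ)-1)/a + (τ:ℝ)*((τ:ℝ)-1)*(2*(τ:ℝ)-1)/(6*a^2)
          + 4*((T:ℝ)-(τ:ℝ))) := by ring
  -- Step 4: total noise bound
  have hS : ∑ s ∈ Finset.range T, ((s:ℝ)+a)^3 * A s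
      ≤ 4*κ*σ^2*(T:ℝ)*((T:ℝ)+2*a)/(μ*(p:ℝ)*B)
        + (64*κ^2*σ^2*((p:ℝ)+1)*((τ:ℝ)-1)/(μ*(p:ℝ)^2*B)) *
          ((τ:ℝ) + (τ:ℝ)*((τ:ℝ)-1)/a + (τ:ℝ)*((τ:ℝ)-1)*(2*(τ:ℝ)-1)/(6*a^2)
            + 4*((T:ℝ)-(τ:ℝ))) := by
    have heqS : ∑ s ∈ Finset.range T, ((s:ℝ)+a)^3 * A s
        = c1 * ∑ s ∈ Finset.range T, ((s:ℝ)+a) + c2 * ∑ s ∈ Finset.range T, G s := by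
      rw [Finset.mul_sum, Finset.mul_sum, ← Finset.sum_add_distrib]
      exact Finset.sum_congr rfl (fun s _ => hAeq s)
    rw [heqS, hsum1]
    have hbd1 : c1 * ((T:ℝ)*((T:ℝ)-1)/2 + (T:ℝ)*a)
        ≤ 4*κ*σ^2*(T:ℝ)*((T:ℝ)+2*a)/(μ*(p:ℝ)*B) := by
      have heq : 4*κ*σ^2*(T:ℝ)*((T:ℝ)+2*a)/(μ*(p:ℝ)*B) = c1 * ((T:ℝ)*((T:ℝ)+2*a)/2) := by
        rw [hc1, hκ]; field_simp; ring
      rw [heq]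
      apply mul_le_mul_of_nonneg_left _ hc1pos
      nlinarith
    have hbd2 : c2 * ∑ s ∈ Finset.range T, G s
        ≤ (64*κ^2*σ^2*((p:ℝ)+1)*((τ:ℝ)-1)/(μ*(p:ℝ)^2*B)) *
          ((τ:ℝ) + (τ:ℝ)*((τ:ℝ)-1)/a + (τ:ℝ)*((τ:ℝ)-1)*(2*(τ:ℝ)-1)/(6*a^2)
            + 4*((T:ℝ)-(τ:ℝ))) := by
      have heq : (64*κ^2*σ^2*((p:ℝ)+1)*((τ:ℝ)-1)/(μ*(p:ℝ)^2*B)) = c2 * ((τ:ℝ)-1) := by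
        rw [hc2, hκ]; field_simp
      rw [heq, mul_assoc]
      exact mul_le_mul_of_nonneg_left hGsum hc2pos
    linarith
  -- Step 5: assemble
  have hD : (0:ℝ) < (T:ℝ) + a - 1 := by linarith
  have hD3 : (0:ℝ) < ((T:ℝ) + a - 1)^3 := by positivity
  have hkeyT := key T le_rfl
  have ha3 : (a-1)^3 * ζ 0 ≤ a^3 * ζ 0 := by
    apply mul_le_mul_of_nonneg_right _ (hζ 0)
    nlinarith
  have hmain : ((T:ℝ) + a - 1)^3 * ζ T
      ≤ a^3 * ζ 0 + 4*κ*σ^2*(T:ℝ)*((T:ℝ)+2*a)/(μ*(p:ℝ)*B)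
        + (64*κ^2*σ^2*((p:ℝ)+1)*((τ:ℝ)-1)/(μ*(p:ℝ)^2*B)) *
          ((τ:ℝ) + (τ:ℝ)*((τ:ℝ)-1)/a + (τ:ℝ)*((τ:ℝ)-1)*(2*(τ:ℝ)-1)/(6*a^2)
            + 4*((T:ℝ)-(τ:ℝ))) := by linarith
  set D := ((T:ℝ) + a - 1)^3 with hDdef
  set br := ((τ : ℝ) + (τ : ℝ) * ((τ : ℝ) - 1) / a
          + (τ : ℝ) * ((τ : ℝ) - 1) * (2 * (τ : ℝ) - 1) / (6 * a ^ 2)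
          + 4 * ((T : ℝ) - (τ : ℝ))) with hbr
  have hsplit : (a ^ 3 / D) * ζ 0
      + 4 * κ * σ ^ 2 * T * ((T : ℝ) + 2 * a) / (μ * p * B * D)
      + (64 * κ ^ 2 * σ ^ 2 * ((p : ℝ) + 1) * ((τ : ℝ) - 1) / (μ * (p : ℝ) ^ 2 * B * D)) * br
      = (a^3 * ζ 0 + 4*κ*σ^2*(T:ℝ)*((T:ℝ)+2*a)/(μ*(p:ℝ)*B)
          + (64*κ^2*σ^2*((p:ℝ)+1)*((τ:ℝ)-1)/(μ*(p:ℝ)^2*B)) * br) / D := by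
    field_simp
  rw [hsplit, le_div_iff₀ hD3]
  linarith [hmain, mul_comm (ζ T) D]
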